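/- arXiv:1303.2968 — 2 statements merged into one kernel-verified Lean document; each statement's English description precedes it below -/
import Mathlib

section
/- Let f : ℂ → ℂ be entire, and suppose there exists α < 2 and C > 0 such that ∫_{B(0,R)} |f| ≤ C R^α for all R > 1. Then f is constant. -/
open MeasureTheory
open scoped Real


lemma circle_submean (f : ℂ → ℂ) (hf : Differentiable ℂ f) (z : ℂ) {s : ℝ} (hs : 0 < s) :
    2 * π * ‖f z‖ ≤ ∫ θ in (0:ℝ)..(2*π), ‖f (circleMap z s θ)‖ := by
  have hd : DiffContOnCl ℂ f (Metric.ball z s) :=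
    (hf.differentiableOn).diffContOnCl
  have hcf := hd.circleIntegral_sub_inv_smul (Metric.mem_ball_self hs)
  have h1 : ‖(2 * π * Complex.I : ℂ) • f z‖ = 2 * π * ‖f z‖ := by
    simp [norm_smul, abs_of_pos Real.pi_pos, mul_assoc]
  calc 2 * π * ‖f z‖ = ‖∮ w in C(z, s), (w - z)⁻¹ • f w‖ := by rw [hcf, h1]
    _ ≤ ∫ θ in (0:ℝ)..(2*π), ‖deriv (circleMap z s) θ • ((circleMap z s θ - z)⁻¹ • f (circleMap z s θ))‖ := by
        apply intervalIntegral.norm_integral_le_integral_norm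
        positivity
    _ = ∫ θ in (0:ℝ)..(2*π), ‖f (circleMap z s θ)‖ := by
        apply intervalIntegral.integral_congr
        intro θ _
        simp [norm_smul, deriv_circleMap, circleMap_sub_center, abs_of_pos hs,
          mul_comm]
        field_simp

lemma area_submean (f : ℂ → ℂ) (hf : Differentiable ℂ f) (z : ℂ) {r : ℝ} (hr : 0 < r) :
    π * r ^ 2 * ‖f z‖ ≤ ∫ w in Metric.ball z r, ‖f w‖ := by
  have hcont : Continuous fun w => ‖f w‖ := hf.continuous.norm
  -- Φ : polar integrand
  set Φ : ℝ × ℝ → ℝ := fun p => p.1 * ‖f (z + p.1 * (Real.cos p.2 + Real.sin p.2 * Complex.I))‖ with hΦdef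
  have hΦc : Continuous Φ := by have := hf.continuous; fun_prop
  -- step 1: translation
  have h1 : (∫ w in Metric.ball z r, ‖f w‖) = ∫ w in Metric.ball (0:ℂ) r, ‖f (z + w)‖ := by
    rw [← integral_indicator measurableSet_ball, ← integral_indicator measurableSet_ball,
      ← MeasureTheory.integral_add_left_eq_self ((Metric.ball z r).indicator fun w => ‖f w‖) z]
    congr 1
    ext w
    by_cases h : w ∈ Metric.ball (0:ℂ) r
    · have h' : z + w ∈ Metric.ball z r := by
        simpa [Metric.mem_ball, dist_eq_norm] using h
      simp [Set.indicator_of_mem h, Set.indicator_of_mem h']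
    · have h' : z + w ∉ Metric.ball z r := by
        simpa [Metric.mem_ball, dist_eq_norm] using h
      simp [Set.indicator_of_notMem h, Set.indicator_of_notMem h']
  -- step 2: polar coordinates
  have h2 : (∫ w in Metric.ball (0:ℂ) r, ‖f (z + w)‖)
      = ∫ p in Complex.polarCoord.target,
          p.1 • (Metric.ball (0:ℂ) r).indicator (fun w => ‖f (z + w)‖) (Complex.polarCoord.symm p) := by
    rw [← integral_indicator measurableSet_ball,
      ← Complex.integral_comp_polarCoord_symm]
    rfl
  -- step 3: restrict to the rectangle
  have htarget : Complex.polarCoord.target = Set.Ioi (0:ℝ) ×ˢ Set.Ioo (-π) π :=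
    Complex.polarCoord_target
  have h3 : (∫ p in Complex.polarCoord.target,
        p.1 • (Metric.ball (0:ℂ) r).indicator (fun w => ‖f (z + w)‖) (Complex.polarCoord.symm p))
      = ∫ p in Set.Ioo (0:ℝ) r ×ˢ Set.Ioo (-π) π, Φ p := by
    rw [htarget]
    have hmeas : MeasurableSet (Set.Ioi (0:ℝ) ×ˢ Set.Ioo (-π) π) :=
      measurableSet_Ioi.prod measurableSet_Ioo
    have hcongr : ∀ p ∈ Set.Ioi (0:ℝ) ×ˢ Set.Ioo (-π) π,
        p.1 • (Metric.ball (0:ℂ) r).indicator (fun w => ‖f (z + w)‖) (Complex.polarCoord.symm p)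
        = (Set.Iio r ×ˢ (Set.univ : Set ℝ)).indicator Φ p := by
      intro p hp
      have hp1 : 0 < p.1 := hp.1
      have habs : ‖Complex.polarCoord.symm p‖ = p.1 := by
        rw [Complex.norm_polarCoord_symm, abs_of_pos hp1]
      have hsymm : Complex.polarCoord.symm p
          = (p.1 : ℂ) * (Real.cos p.2 + Real.sin p.2 * Complex.I) :=
        Complex.polarCoord_symm_apply p
      by_cases h : p.1 < r
      · have hm : Complex.polarCoord.symm p ∈ Metric.ball (0:ℂ) r := by
          rw [Metric.mem_ball, dist_zero_right, habs]; exact h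
        have hm' : p ∈ Set.Iio r ×ˢ (Set.univ : Set ℝ) := ⟨h, Set.mem_univ _⟩
        rw [Set.indicator_of_mem hm, Set.indicator_of_mem hm', hΦdef]
        simp [hsymm, smul_eq_mul]
      · have hm : Complex.polarCoord.symm p ∉ Metric.ball (0:ℂ) r := by
          rw [Metric.mem_ball, dist_zero_right, habs]; exact h
        have hm' : p ∉ Set.Iio r ×ˢ (Set.univ : Set ℝ) := fun hc => h hc.1
        rw [Set.indicator_of_notMem hm, Set.indicator_of_notMem hm']
        simp
    rw [setIntegral_congr_fun hmeas hcongr, setIntegral_indicator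
      (measurableSet_Iio.prod MeasurableSet.univ)]
    rw [Set.prod_inter_prod, Set.inter_univ, Set.Ioi_inter_Iio]
  -- step 4: Fubini and lower bound
  have hInt : IntegrableOn Φ (Set.Ioo (0:ℝ) r ×ˢ Set.Ioo (-π) π) volume := by
    apply (hΦc.continuousOn.integrableOn_compact
      ((isCompact_Icc (a := (0:ℝ)) (b := r)).prod (isCompact_Icc (a := -π) (b := π)))).mono_set
    exact Set.prod_mono Set.Ioo_subset_Icc_self Set.Ioo_subset_Icc_self
  have hInt' : Integrable Φ
      ((volume.restrict (Set.Ioo (0:ℝ) r)).prod (volume.restrict (Set.Ioo (-π) π))) := by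
    rwa [Measure.prod_restrict, ← MeasureTheory.Measure.volume_eq_prod]
  have h4 : (∫ p in Set.Ioo (0:ℝ) r ×ˢ Set.Ioo (-π) π, Φ p)
      = ∫ s in Set.Ioo (0:ℝ) r, ∫ θ in Set.Ioo (-π) π, Φ (s, θ) := by
    rw [MeasureTheory.Measure.volume_eq_prod, setIntegral_prod]
    rw [← MeasureTheory.Measure.volume_eq_prod]; exact hInt
  -- pointwise lower bound for the inner integral
  have h5 : ∀ s ∈ Set.Ioo (0:ℝ) r,
      2 * π * ‖f z‖ * s ≤ ∫ θ in Set.Ioo (-π) π, Φ (s, θ) := by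
    intro s hs
    have hs0 : 0 < s := hs.1
    have hper : Function.Periodic (fun θ => Φ (s, θ)) (2 * π) := by
      intro θ
      simp only [hΦdef, Real.cos_add_two_pi, Real.sin_add_two_pi]
    have hΦeq : ∀ θ : ℝ, Φ (s, θ) = s * ‖f (circleMap z s θ)‖ := by
      intro θ
      simp [hΦdef, circleMap, Complex.exp_mul_I, Complex.ofReal_cos, Complex.ofReal_sin]
    have e1 : -π + 2 * π = π := by ring
    have e2 : (0:ℝ) + 2 * π = 2 * π := by ring
    have hshift := hper.intervalIntegral_add_eq (-π) 0
    rw [e1, e2] at hshift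
    calc 2 * π * ‖f z‖ * s = s * (2 * π * ‖f z‖) := by ring
      _ ≤ s * ∫ θ in (0:ℝ)..(2*π), ‖f (circleMap z s θ)‖ :=
          mul_le_mul_of_nonneg_left (circle_submean f hf z hs0) hs0.le
      _ = ∫ θ in (0:ℝ)..(2*π), s * ‖f (circleMap z s θ)‖ :=
          (intervalIntegral.integral_const_mul s _).symm
      _ = ∫ θ in (0:ℝ)..(2*π), Φ (s, θ) := by
          apply intervalIntegral.integral_congr; intro θ _; exact (hΦeq θ).symm
      _ = ∫ θ in (-π)..π, Φ (s, θ) := hshift.symm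
      _ = ∫ θ in Set.Ioc (-π) π, Φ (s, θ) :=
          intervalIntegral.integral_of_le (by linarith [Real.pi_pos])
      _ = ∫ θ in Set.Ioo (-π) π, Φ (s, θ) := integral_Ioc_eq_integral_Ioo
  -- integrate the lower bound
  have hIntL : IntegrableOn (fun s : ℝ => 2 * π * ‖f z‖ * s) (Set.Ioo (0:ℝ) r) volume := by
    apply ((continuous_const.mul continuous_id).continuousOn.integrableOn_compact
      (isCompact_Icc (a := (0:ℝ)) (b := r))).mono_set Set.Ioo_subset_Icc_self
  have hIntR : IntegrableOn (fun s : ℝ => ∫ θ in Set.Ioo (-π) π, Φ (s, θ))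
      (Set.Ioo (0:ℝ) r) volume := hInt'.integral_prod_left
  have h6 : (∫ s in Set.Ioo (0:ℝ) r, 2 * π * ‖f z‖ * s)
      ≤ ∫ s in Set.Ioo (0:ℝ) r, ∫ θ in Set.Ioo (-π) π, Φ (s, θ) :=
    setIntegral_mono_on hIntL hIntR measurableSet_Ioo h5
  have h7 : (∫ s in Set.Ioo (0:ℝ) r, 2 * π * ‖f z‖ * s) = π * r ^ 2 * ‖f z‖ := by
    rw [← integral_Ioc_eq_integral_Ioo,
      ← intervalIntegral.integral_of_le hr.le, intervalIntegral.integral_const_mul,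
      integral_id]
    ring
  rw [h1, h2, h3, h4, ← h7]
  exact h6

/-- An entire function whose `L¹` norm on disks of radius `R` grows at most like `C R^α`
for some `α < 2` is constant. -/
theorem stmt_4 (f : ℂ → ℂ) (hf : Differentiable ℂ f) (α C : ℝ) (hα : α < 2) (hC : 0 < C)
    (hgrowth : ∀ R : ℝ, 1 < R →
      (∫ z in Metric.ball (0:ℂ) R, ‖f z‖) ≤ C * R ^ α) :
    ∃ c : ℂ, ∀ z, f z = c := by
  refine ⟨0, fun z => ?_⟩
  have hb : ∀ r : ℝ, max ‖z‖ 1 < r → ‖f z‖ ≤ (C * 2 ^ α / π) * r ^ (α - 2) := by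
    intro r hrl
    have hr1 : 1 < r := lt_of_le_of_lt (le_max_right _ _) hrl
    have hrz : ‖z‖ < r := lt_of_le_of_lt (le_max_left _ _) hrl
    have hr0 : 0 < r := lt_trans one_pos hr1
    have hsub : Metric.ball z r ⊆ Metric.ball (0:ℂ) (2*r) := by
      intro w hw
      rw [Metric.mem_ball] at hw ⊢
      calc dist w 0 ≤ dist w z + dist z 0 := dist_triangle _ _ _
        _ < r + r := by rw [dist_zero_right]; exact add_lt_add hw hrz
        _ = 2*r := by ring
    have hint2r : IntegrableOn (fun w => ‖f w‖) (Metric.ball (0:ℂ) (2*r)) volume :=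
      (hf.continuous.norm.continuousOn.integrableOn_compact
        (isCompact_closedBall (0:ℂ) (2*r))).mono_set Metric.ball_subset_closedBall
    have hmono : (∫ w in Metric.ball z r, ‖f w‖) ≤ ∫ w in Metric.ball (0:ℂ) (2*r), ‖f w‖ :=
      setIntegral_mono_set hint2r (Filter.Eventually.of_forall fun w => norm_nonneg _)
        (HasSubset.Subset.eventuallyLE hsub)
    have hgr := hgrowth (2*r) (by linarith)
    have habs : (∫ w in Metric.ball (0:ℂ) (2*r), ‖f w‖)
        = ∫ w in Metric.ball (0:ℂ) (2*r), ‖f w‖ := by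
      rfl
    have hπ : 0 < π * r ^ 2 := by positivity
    have hmain : π * r ^ 2 * ‖f z‖ ≤ C * (2*r) ^ α :=
      calc π*r^2*‖f z‖ ≤ ∫ w in Metric.ball z r, ‖f w‖ := area_submean f hf z hr0
        _ ≤ ∫ w in Metric.ball (0:ℂ) (2*r), ‖f w‖ := hmono
        _ = ∫ w in Metric.ball (0:ℂ) (2*r), ‖f w‖ := habs.symm
        _ ≤ C * (2*r) ^ α := hgr
    have h2r : (2*r : ℝ) ^ α = 2^α * r^α := Real.mul_rpow (by norm_num) hr0.le
    rw [h2r] at hmain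
    have hdiv : ‖f z‖ ≤ C * (2^α * r^α) / (π * r^2) := by
      rw [le_div_iff₀ hπ]; linarith
    calc ‖f z‖ ≤ C * (2^α * r^α) / (π * r^2) := hdiv
      _ = (C * 2^α/π) * (r ^ α / r ^ (2:ℝ)) := by
          rw [← Real.rpow_natCast r 2]; push_cast; ring
      _ = (C * 2^α/π) * r ^ (α - 2) := by rw [← Real.rpow_sub hr0]
  have htend : Filter.Tendsto (fun r : ℝ => (C * 2^α/π) * r ^ (α - 2))
      Filter.atTop (nhds 0) := by
    have h := tendsto_rpow_neg_atTop (y := 2 - α) (by linarith)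
    have h2 : (fun r : ℝ => r ^ (α - 2)) = fun r : ℝ => r ^ (-(2 - α)) := by
      funext r; ring_nf
    simpa [h2] using h.const_mul (C * 2^α/π)
  have hev : ∀ᶠ r in Filter.atTop, ‖f z‖ ≤ (C * 2^α/π) * r ^ (α-2) :=
    (Filter.eventually_gt_atTop (max ‖z‖ 1)).mono hb
  have hle : ‖f z‖ ≤ 0 := ge_of_tendsto htend hev
  simpa using norm_le_zero_iff.mp hle
end

section
/- Let R be a bounded open rectangle in ℝ², E₁ ∈ L^q(R; ℝ²) and E₂ ∈ L^{q'}(R; ℝ²) ∩ L²(R; ℝ²), with 1/q + 1/q' = 1, q < 2, where E₁ has renormalized energy W(E₁, 1_R) with respect to finitely many singular points x_i ∈ R. Then W(E₁ + E₂, 1_R) ≤ W(E₁, 1_R) + ‖E₁‖_{L^q(R)} ‖E₂‖_{L^{q'}(R)} + ½‖E₂‖²_{L²(R)}. -/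
open MeasureTheory Filter
open scoped Real Topology ENNReal NNReal

/-- An open rectangle in the plane (identified with `ℂ`). -/
def rectC (a₁ b₁ a₂ b₂ : ℝ) : Set ℂ := {z : ℂ | z.re ∈ Set.Ioo a₁ b₁ ∧ z.im ∈ Set.Ioo a₂ b₂}

/-- `W(E, 1_U) = w` for a vector field `E` with finitely many singular points `pts`:
the renormalized limit `lim_{η→0⁺} (½ ∫_{U ∖ ∪ B(p,η)} |E|² + π (#pts) log η) = w`. -/
def WrectHas (U : Set ℂ) (pts : Finset ℂ) (E : ℂ → ℂ) (w : ℝ) : Prop :=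
  Tendsto
    (fun η : ℝ =>
      (1 / 2) * (∫ z in U \ ⋃ p ∈ pts, Metric.ball p η, ‖E z‖ ^ 2)
        + π * (pts.card : ℝ) * Real.log η)
    (nhdsWithin 0 (Set.Ioi (0:ℝ))) (nhds w)

set_option maxHeartbeats 1000000 in
/-- If `E₁ ∈ L^q`, `E₂ ∈ L^{q'} ∩ L²` on a rectangle `R` with `1/q + 1/q' = 1`, `q < 2`,
and `E₁` has renormalized energy `W(E₁, 1_R)` w.r.t. finitely many singular points, then
`W(E₁+E₂, 1_R) ≤ W(E₁, 1_R) + ‖E₁‖_{L^q} ‖E₂‖_{L^{q'}} + ½ ‖E₂‖²_{L²}`. -/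
theorem stmt_16 (a₁ b₁ a₂ b₂ : ℝ) (hab₁ : a₁ < b₁) (hab₂ : a₂ < b₂)
    (pts : Finset ℂ) (hpts : ↑pts ⊆ rectC a₁ b₁ a₂ b₂)
    (E₁ E₂ : ℂ → ℂ) (q q' : ℝ) (hq1 : 1 < q) (hq2 : q < 2) (hconj : 1 / q + 1 / q' = 1)
    (hE₁ : MemLp E₁ (ENNReal.ofReal q) (volume.restrict (rectC a₁ b₁ a₂ b₂)))
    (hE₂ : MemLp E₂ (ENNReal.ofReal q') (volume.restrict (rectC a₁ b₁ a₂ b₂)))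
    (hE₂2 : MemLp E₂ 2 (volume.restrict (rectC a₁ b₁ a₂ b₂)))
    (w w₁ : ℝ)
    (hw₁ : WrectHas (rectC a₁ b₁ a₂ b₂) pts E₁ w₁)
    (hw : WrectHas (rectC a₁ b₁ a₂ b₂) pts (fun z => E₁ z + E₂ z) w) :
    w ≤ w₁ +
        (eLpNorm E₁ (ENNReal.ofReal q) (volume.restrict (rectC a₁ b₁ a₂ b₂))).toReal *
          (eLpNorm E₂ (ENNReal.ofReal q') (volume.restrict (rectC a₁ b₁ a₂ b₂))).toReal +
        (1 / 2) * ((eLpNorm E₂ 2 (volume.restrict (rectC a₁ b₁ a₂ b₂))).toReal) ^ 2 := by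
  set R : Set ℂ := rectC a₁ b₁ a₂ b₂ with hRdef
  set μR : Measure ℂ := volume.restrict R with hμR
  have hRopen : IsOpen R := by
    have h1 : IsOpen {z : ℂ | z.re ∈ Set.Ioo a₁ b₁} := isOpen_Ioo.preimage Complex.continuous_re
    have h2 : IsOpen {z : ℂ | z.im ∈ Set.Ioo a₂ b₂} := isOpen_Ioo.preimage Complex.continuous_im
    exact h1.inter h2
  have hRm : MeasurableSet R := hRopen.measurableSet
  set A : ℝ := (eLpNorm E₁ (ENNReal.ofReal q) μR).toReal *
      (eLpNorm E₂ (ENNReal.ofReal q') μR).toReal with hAdef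
  set B : ℝ := (eLpNorm E₂ 2 μR).toReal with hBdef
  have hA0 : 0 ≤ A := mul_nonneg ENNReal.toReal_nonneg ENNReal.toReal_nonneg
  have hB0 : 0 ≤ B := ENNReal.toReal_nonneg
  have hq0 : 0 < q := lt_trans one_pos hq1
  have hq'0 : 0 < q' := by
    have h1 : 1 / q < 1 := by rw [div_lt_one hq0]; exact hq1
    have h2 : 0 < 1 / q' := by linarith
    exact (one_div_pos).mp h2
  -- conjugate exponents in ℝ≥0∞
  have hconjE : (1 : ℝ≥0∞) / 1 = 1 / ENNReal.ofReal q + 1 / ENNReal.ofReal q' := by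
    rw [one_div, one_div, one_div, inv_one,
      ← ENNReal.ofReal_inv_of_pos hq0, ← ENNReal.ofReal_inv_of_pos hq'0,
      ← ENNReal.ofReal_add (by positivity) (by positivity), ← ENNReal.ofReal_one]
    congr 1
    rw [← hconj, one_div, one_div]
  -- Hölder: the product ‖E₁‖‖E₂‖ is integrable on R with integral ≤ A
  have hgmem : MemLp (fun z => ‖E₁ z‖ * ‖E₂ z‖) 1 μR := by
    have h := MemLp.smul (f := fun z => ‖E₂ z‖) (φ := fun z => ‖E₁ z‖)
      hE₂.norm hE₁.norm (hpqr := (⟨by simpa [one_div] using hconjE.symm⟩ : ENNReal.HolderTriple (ENNReal.ofReal q) (ENNReal.ofReal q') 1))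
    have he : ((fun z => ‖E₁ z‖) • fun z => ‖E₂ z‖ : ℂ → ℝ)
        = fun z => ‖E₁ z‖ * ‖E₂ z‖ := rfl
    rwa [he] at h
  have hint_g : Integrable (fun z => ‖E₁ z‖ * ‖E₂ z‖) μR := memLp_one_iff_integrable.mp hgmem
  have hg1 : eLpNorm (fun z => ‖E₁ z‖ * ‖E₂ z‖) 1 μR ≤
      eLpNorm E₁ (ENNReal.ofReal q) μR * eLpNorm E₂ (ENNReal.ofReal q') μR := by
    have h := eLpNorm_smul_le_mul_eLpNorm (f := fun z => ‖E₂ z‖) (φ := fun z => ‖E₁ z‖)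
      (hE₂.norm.1) (hE₁.norm.1) (hpqr := (⟨by simpa [one_div] using hconjE.symm⟩ : ENNReal.HolderTriple (ENNReal.ofReal q) (ENNReal.ofReal q') 1))
    rw [eLpNorm_norm, eLpNorm_norm] at h
    exact h
  have hIg : ∫ z, ‖E₁ z‖ * ‖E₂ z‖ ∂μR ≤ A := by
    have h0 : ∫ z, ‖E₁ z‖ * ‖E₂ z‖ ∂μR
        = (eLpNorm (fun z => ‖E₁ z‖ * ‖E₂ z‖) 1 μR).toReal := by
      rw [eLpNorm_one_eq_lintegral_enorm, ← integral_norm_eq_lintegral_enorm hint_g.1]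
      congr 1 with z
      rw [Real.norm_of_nonneg (mul_nonneg (norm_nonneg _) (norm_nonneg _))]
    rw [h0, hAdef, ← ENNReal.toReal_mul]
    exact ENNReal.toReal_mono (ENNReal.mul_ne_top hE₁.2.ne hE₂.2.ne) hg1
  -- the L² integral of E₂ over R equals B²
  have hint_2 : Integrable (fun z => ‖E₂ z‖ ^ 2) μR :=
    (memLp_two_iff_integrable_sq_norm hE₂2.1).mp hE₂2
  have hI2 : ∫ z, ‖E₂ z‖ ^ 2 ∂μR = B ^ 2 := by
    have h0 : ∫ z, ‖E₂ z‖ ^ 2 ∂μR = (∫⁻ z, (‖E₂ z‖₊ : ℝ≥0∞) ^ (2:ℝ) ∂μR).toReal := by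
      have ha : ∫ z, ‖E₂ z‖ ^ 2 ∂μR = ∫ z, ‖(fun z => ‖E₂ z‖ ^ 2) z‖ ∂μR := by
        congr 1 with z
        rw [Real.norm_of_nonneg (by positivity)]
      rw [ha, integral_norm_eq_lintegral_enorm hint_2.1]
      congr 1
      refine lintegral_congr fun z => ?_
      have h2 : ((2:ℝ)) = ((2:ℕ):ℝ) := by norm_num
      rw [h2, ENNReal.rpow_natCast]
      have habs : ‖‖E₂ z‖‖₊ = ‖E₂ z‖₊ := by
        rw [nnnorm_norm]
      simp [nnnorm_pow, habs, enorm_eq_nnnorm]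
    have h1 : eLpNorm E₂ 2 μR = (∫⁻ z, (‖E₂ z‖₊ : ℝ≥0∞) ^ (2:ℝ) ∂μR) ^ (1/(2:ℝ)) := by
      rw [eLpNorm_eq_lintegral_rpow_enorm_toReal two_ne_zero ENNReal.ofNat_ne_top]
      norm_num
      rfl
    rw [h0, hBdef, h1, ← ENNReal.toReal_rpow]
    rw [← Real.rpow_natCast ((∫⁻ z, (‖E₂ z‖₊ : ℝ≥0∞) ^ (2:ℝ) ∂μR).toReal ^ (1/(2:ℝ))) 2,
      ← Real.rpow_mul ENNReal.toReal_nonneg]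
    norm_num
  -- the pointwise inequality for all η
  have key : ∀ η : ℝ,
      (1 / 2) * (∫ z in R \ ⋃ p ∈ pts, Metric.ball p η, ‖(fun z => E₁ z + E₂ z) z‖ ^ 2)
          + π * (pts.card : ℝ) * Real.log η
        ≤ ((1 / 2) * (∫ z in R \ ⋃ p ∈ pts, Metric.ball p η, ‖E₁ z‖ ^ 2)
          + π * (pts.card : ℝ) * Real.log η) + (A + (1/2) * B ^ 2) := by
    intro η
    set S : Set ℂ := R \ ⋃ p ∈ pts, Metric.ball p η with hSdef
    have hSm : MeasurableSet S :=
      hRm.diff (MeasurableSet.biUnion pts.countable_toSet fun p _ => measurableSet_ball)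
    have hsub : S ⊆ R := Set.diff_subset
    have hres : μR.restrict S = volume.restrict S := by
      rw [hμR, Measure.restrict_restrict hSm, Set.inter_eq_left.mpr hsub]
    have hAESM₁ : AEStronglyMeasurable E₁ (volume.restrict S) := by
      rw [← hres]; exact hE₁.1.restrict
    have hAESM₂ : AEStronglyMeasurable E₂ (volume.restrict S) := by
      rw [← hres]; exact hE₂.1.restrict
    have hE₂S : MemLp E₂ 2 (volume.restrict S) := by
      rw [← hres]; exact hE₂2.restrict S
    -- bound the cross and square terms on S
    have hprodS : Integrable (fun z => ‖E₁ z‖ * ‖E₂ z‖) (volume.restrict S) := by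
      rw [← hres]; exact hint_g.restrict
    have hsqS : Integrable (fun z => ‖E₂ z‖ ^ 2) (volume.restrict S) := by
      rw [← hres]; exact hint_2.restrict
    have hprod_le : ∫ z in S, ‖E₁ z‖ * ‖E₂ z‖ ≤ A := by
      refine le_trans ?_ hIg
      rw [← hres]
      exact setIntegral_le_integral hint_g
        (Eventually.of_forall fun z => mul_nonneg (norm_nonneg _) (norm_nonneg _))
    have hsq_le : ∫ z in S, ‖E₂ z‖ ^ 2 ≤ B ^ 2 := by
      rw [← hI2, ← hres]
      exact setIntegral_le_integral hint_2 (Eventually.of_forall fun z => by positivity)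
    by_cases hI1 : Integrable (fun z => ‖E₁ z‖ ^ 2) (volume.restrict S)
    · have hE₁S : MemLp E₁ 2 (volume.restrict S) :=
        (memLp_two_iff_integrable_sq_norm hAESM₁).mpr hI1
      have hfS : MemLp (fun z => E₁ z + E₂ z) 2 (volume.restrict S) := hE₁S.add hE₂S
      have hIf : Integrable (fun z => ‖E₁ z + E₂ z‖ ^ 2) (volume.restrict S) := by
        simpa using (memLp_two_iff_integrable_sq_norm hfS.1).mp hfS
      have hmono : ∫ z in S, ‖E₁ z + E₂ z‖ ^ 2
          ≤ ∫ z in S, (‖E₁ z‖ ^ 2 + 2 * (‖E₁ z‖ * ‖E₂ z‖) + ‖E₂ z‖ ^ 2) := by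
        refine integral_mono hIf ((hI1.add (hprodS.const_mul 2)).add hsqS) fun z => ?_
        have h := norm_add_le (E₁ z) (E₂ z)
        nlinarith [norm_nonneg (E₁ z), norm_nonneg (E₂ z), norm_nonneg (E₁ z + E₂ z)]
      have hsplit : ∫ z in S, (‖E₁ z‖ ^ 2 + 2 * (‖E₁ z‖ * ‖E₂ z‖) + ‖E₂ z‖ ^ 2)
          = (∫ z in S, ‖E₁ z‖ ^ 2) + 2 * (∫ z in S, ‖E₁ z‖ * ‖E₂ z‖)
            + ∫ z in S, ‖E₂ z‖ ^ 2 := by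
        have hc : Integrable (fun z => 2 * (‖E₁ z‖ * ‖E₂ z‖)) (volume.restrict S) :=
          hprodS.const_mul 2
        have h12 : Integrable (fun z => ‖E₁ z‖ ^ 2 + 2 * (‖E₁ z‖ * ‖E₂ z‖))
            (volume.restrict S) := hI1.add hc
        rw [integral_add h12 hsqS, integral_add hI1 hc, integral_const_mul]
      have : ∫ z in S, ‖E₁ z + E₂ z‖ ^ 2
          ≤ (∫ z in S, ‖E₁ z‖ ^ 2) + 2 * A + B ^ 2 := by
        rw [hsplit] at hmono
        linarith
      simp only []
      linarith
    · have hIf' : ¬ Integrable (fun z => ‖E₁ z + E₂ z‖ ^ 2) (volume.restrict S) := by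
        intro h
        have hfS : MemLp (fun z => E₁ z + E₂ z) 2 (volume.restrict S) :=
          (memLp_two_iff_integrable_sq_norm (hAESM₁.add hAESM₂)).mpr (by simpa using h)
        have hE₁S : MemLp E₁ 2 (volume.restrict S) := by
          have h' := hfS.sub hE₂S
          have he : ((fun z => E₁ z + E₂ z) - E₂) = E₁ := by funext z; simp
          rwa [he] at h' 
        exact hI1 ((memLp_two_iff_integrable_sq_norm hAESM₁).mp hE₁S)
      have e1 : ∫ z in S, ‖(fun z => E₁ z + E₂ z) z‖ ^ 2 = 0 := by
        refine integral_undef ?_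
        simpa using hIf'
      have e2 : ∫ z in S, ‖E₁ z‖ ^ 2 = 0 := integral_undef hI1
      rw [e1, e2]
      nlinarith
  -- pass to the limit
  unfold WrectHas at hw hw₁
  have h2 : Tendsto
      (fun η : ℝ =>
        ((1 / 2) * (∫ z in R \ ⋃ p ∈ pts, Metric.ball p η, ‖E₁ z‖ ^ 2)
          + π * (pts.card : ℝ) * Real.log η) + (A + (1/2) * B ^ 2))
      (nhdsWithin 0 (Set.Ioi (0:ℝ))) (nhds (w₁ + (A + (1/2) * B ^ 2))) :=
    hw₁.add_const _
  have hfin := le_of_tendsto_of_tendsto' hw h2 key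
  linarith
end
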